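/- Let P > 2 be a real number, let κ ≥ 0 and ĉ_a, c_c > 0 be constants, let r_a be an accuracy rate and r_c a cost rate, and assume that ĉ_a·r_a''(n) + c_c·r_c''(n) > 0 for all n ∈ [1, P−1]. Then the function u : [1, P−1] → (0, ∞), u(n) = (κ + ĉ_a·r_a(n) + c_c·r_c(n))/(P − n), attains its global minimum over [1, P−1] at a unique point n* ∈ [1, P−1]. (This is the single iteration step of Proposition 3.4: at iteration j of the sequential context-aware construction, P = p_{j−1} is the remaining budget, κ = κ_{j−1} ≥ 0 is fixed by the previously trained models, and ĉ_a = w_{j−1}(n_{j−1}*)·c_{a,j}.) -/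

import Mathlib

open Set

/-- Proposition 3.4 (single iteration step): existence and uniqueness of the global minimizer
of the iteration objective `u(n) = (κ + ĉₐ·rₐ(n) + c_c·r_c(n))/(P − n)` on `[1, P−1]`. -/
theorem stmt_3
    (P κ ca cc : ℝ) (ra rc : ℝ → ℝ)
    (hP : 2 < P) (hκ : 0 ≤ κ) (hca : 0 < ca) (hcc : 0 < cc)
    -- `ra` is an accuracy rate: positive, decreasing, twice continuously differentiable on `(0, ∞)`
    (hra_pos : ∀ x ∈ Ioi (0 : ℝ), 0 < ra x)
    (hra_anti : StrictAntiOn ra (Ioi 0))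
    (hra_smooth : ContDiffOn ℝ 2 ra (Ioi 0))
    -- `rc` is a cost rate: positive, increasing, twice continuously differentiable on `(0, ∞)`
    (hrc_pos : ∀ x ∈ Ioi (0 : ℝ), 0 < rc x)
    (hrc_mono : StrictMonoOn rc (Ioi 0))
    (hrc_smooth : ContDiffOn ℝ 2 rc (Ioi 0))
    -- strict convexity condition (3.16)
    (hconv : ∀ n ∈ Icc (1 : ℝ) (P - 1),
      0 < ca * deriv (deriv ra) n + cc * deriv (deriv rc) n) :
    ∃ nstar ∈ Icc (1 : ℝ) (P - 1),
      (∀ n ∈ Icc (1 : ℝ) (P - 1),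
        (κ + ca * ra nstar + cc * rc nstar) / (P - nstar) ≤
          (κ + ca * ra n + cc * rc n) / (P - n)) ∧
      (∀ n ∈ Icc (1 : ℝ) (P - 1), n ≠ nstar →
        (κ + ca * ra nstar + cc * rc nstar) / (P - nstar) <
          (κ + ca * ra n + cc * rc n) / (P - n)) := by
  set S : Set ℝ := Icc (1 : ℝ) (P - 1) with hS
  have hsub : S ⊆ Ioi (0 : ℝ) := fun x hx => lt_of_lt_of_le one_pos hx.1
  set g : ℝ → ℝ := fun n => κ + ca * ra n + cc * rc n with hg
  set g' : ℝ → ℝ := fun n => ca * deriv ra n + cc * deriv rc n with hg'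
  set u : ℝ → ℝ := fun n => g n / (P - n) with hu
  set F : ℝ → ℝ := fun n => g' n * (P - n) + g n with hF
  -- basic differentiability facts on Ioi 0
  have hra_d : ∀ x ∈ Ioi (0:ℝ), DifferentiableAt ℝ ra x := fun x hx =>
    ((hra_smooth x hx).differentiableWithinAt (by norm_num)).differentiableAt
      (isOpen_Ioi.mem_nhds hx)
  have hrc_d : ∀ x ∈ Ioi (0:ℝ), DifferentiableAt ℝ rc x := fun x hx =>
    ((hrc_smooth x hx).differentiableWithinAt (by norm_num)).differentiableAt
      (isOpen_Ioi.mem_nhds hx)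
  have hra_smooth' : ContDiffOn ℝ 1 (deriv ra) (Ioi 0) :=
    hra_smooth.deriv_of_isOpen isOpen_Ioi (by norm_num)
  have hrc_smooth' : ContDiffOn ℝ 1 (deriv rc) (Ioi 0) :=
    hrc_smooth.deriv_of_isOpen isOpen_Ioi (by norm_num)
  have hra_d' : ∀ x ∈ Ioi (0:ℝ), DifferentiableAt ℝ (deriv ra) x := fun x hx =>
    ((hra_smooth' x hx).differentiableWithinAt one_ne_zero).differentiableAt
      (isOpen_Ioi.mem_nhds hx)
  have hrc_d' : ∀ x ∈ Ioi (0:ℝ), DifferentiableAt ℝ (deriv rc) x := fun x hx =>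
    ((hrc_smooth' x hx).differentiableWithinAt one_ne_zero).differentiableAt
      (isOpen_Ioi.mem_nhds hx)
  -- g has derivative g'
  have hg_deriv : ∀ x ∈ Ioi (0:ℝ), HasDerivAt g (g' x) x := by
    intro x hx
    have h1 := ((hra_d x hx).hasDerivAt.const_mul ca)
    have h2 := ((hrc_d x hx).hasDerivAt.const_mul cc)
    exact (h1.const_add κ).add h2
  -- g' has derivative g''
  have hg'_deriv : ∀ x ∈ Ioi (0:ℝ),
      HasDerivAt g' (ca * deriv (deriv ra) x + cc * deriv (deriv rc) x) x := by
    intro x hx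
    have h1 := ((hra_d' x hx).hasDerivAt.const_mul ca)
    have h2 := ((hrc_d' x hx).hasDerivAt.const_mul cc)
    exact h1.add h2
  -- F has positive derivative on S
  have hF_deriv : ∀ x ∈ Ioi (0:ℝ),
      HasDerivAt F ((ca * deriv (deriv ra) x + cc * deriv (deriv rc) x) * (P - x)) x := by
    intro x hx
    have h1 := (hg'_deriv x hx).mul ((hasDerivAt_id x).const_sub P)
    have h2 := (h1.add (hg_deriv x hx))
    refine h2.congr_deriv ?_
    simp only [id_eq]
    ring
  -- continuity
  have hg_cont : ContinuousOn g (Ioi 0) := by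
    apply (continuousOn_const.add ((hra_smooth.continuousOn.const_smul ca))).add
      ((hrc_smooth.continuousOn.const_smul cc))
  have hg'_cont : ContinuousOn g' (Ioi 0) := by
    apply ((hra_smooth'.continuousOn.const_smul ca)).add
      ((hrc_smooth'.continuousOn.const_smul cc))
  have hF_cont : ContinuousOn F (Ioi 0) :=
    (hg'_cont.mul (continuousOn_const.sub continuousOn_id)).add hg_cont
  -- F is strictly monotone on S
  have hint : interior S ⊆ Ioi (0:ℝ) := interior_subset.trans hsub
  have hF_mono : StrictMonoOn F S := by
    apply strictMonoOn_of_deriv_pos (convex_Icc _ _) (hF_cont.mono hsub)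
    intro x hx
    rw [interior_Icc] at hx
    rw [(hF_deriv x (lt_trans one_pos hx.1)).deriv]
    have hc := hconv x ⟨le_of_lt hx.1, le_of_lt hx.2⟩
    have : 0 < P - x := by linarith [hx.2]
    positivity
  -- u has derivative F/(P-·)² on S
  have hPx : ∀ x ∈ S, (0:ℝ) < P - x := fun x hx => by
    have h2 : x ≤ P - 1 := hx.2
    linarith
  have hu_deriv : ∀ x ∈ S, HasDerivAt u (F x / (P - x) ^ 2) x := by
    intro x hx
    have hne : P - x ≠ 0 := ne_of_gt (hPx x hx)
    have h := (hg_deriv x (hsub hx)).div ((hasDerivAt_id x).const_sub P) hne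
    refine h.congr_deriv ?_
    simp only [hF, id_eq]
    field_simp
    ring
  have hu_cont : ContinuousOn u S := by
    apply (hg_cont.mono hsub).div (continuousOn_const.sub continuousOn_id)
    exact fun x hx => ne_of_gt (hPx x hx)
  -- existence of minimizer
  have hne : S.Nonempty := nonempty_Icc.2 (by linarith)
  obtain ⟨nstar, hns, hmin0⟩ := isCompact_Icc.exists_isMinOn hne hu_cont
  have hmin : ∀ x ∈ S, u nstar ≤ u x := fun x hx => hmin0 hx
  refine ⟨nstar, hns, fun n hn => hmin n hn, ?_⟩
  intro n hn hne'
  -- strict: suppose u n = u nstar, derive contradiction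
  rcases lt_or_eq_of_le (hmin n hn) with h | h
  · exact h
  exfalso
  -- both a < b achieve the minimum value
  obtain ⟨a, b, ha, hb, hab, hua, hub⟩ :
      ∃ a b, a ∈ S ∧ b ∈ S ∧ a < b ∧ u a = u nstar ∧ u b = u nstar := by
    rcases lt_or_gt_of_ne hne' with hlt | hlt
    · exact ⟨n, nstar, hn, hns, hlt, h.symm, rfl⟩
    · exact ⟨nstar, n, hns, hn, hlt, rfl, h.symm⟩
  set c : ℝ := (a + b) / 2 with hc
  have hac : a < c := by simp only [hc]; linarith
  have hcb : c < b := by simp only [hc]; linarith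
  have hIab : Icc a b ⊆ S := Icc_subset_Icc ha.1 hb.2
  have hcS : c ∈ S := hIab ⟨le_of_lt hac, le_of_lt hcb⟩
  obtain ⟨x1, hx1, hd1⟩ := exists_hasDerivAt_eq_slope u (fun x => F x / (P - x) ^ 2) hac
    (hu_cont.mono (hIab.trans' (Icc_subset_Icc le_rfl (le_of_lt hcb))))
    (fun x hx => hu_deriv x (hIab ⟨le_of_lt hx.1, le_of_lt (lt_trans hx.2 hcb)⟩))
  obtain ⟨x2, hx2, hd2⟩ := exists_hasDerivAt_eq_slope u (fun x => F x / (P - x) ^ 2) hcb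
    (hu_cont.mono (hIab.trans' (Icc_subset_Icc (le_of_lt hac) le_rfl)))
    (fun x hx => hu_deriv x (hIab ⟨le_of_lt (lt_trans hac hx.1), le_of_lt hx.2⟩))
  have hx1S : x1 ∈ S := hIab ⟨le_of_lt hx1.1, le_of_lt (lt_trans hx1.2 hcb)⟩
  have hx2S : x2 ∈ S := hIab ⟨le_of_lt (lt_trans hac hx2.1), le_of_lt hx2.2⟩
  have huc : u a ≤ u c := by rw [hua]; exact hmin c hcS
  have hF1 : 0 ≤ F x1 := by
    have hq : 0 ≤ F x1 / (P - x1) ^ 2 := by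
      rw [hd1]
      apply div_nonneg (by linarith) (by linarith)
    have hp : (0:ℝ) < (P - x1) ^ 2 := pow_pos (hPx x1 hx1S) 2
    have h := mul_nonneg hq hp.le
    rwa [div_mul_cancel₀ _ (ne_of_gt hp)] at h
  have hF2 : F x2 ≤ 0 := by
    have hq : F x2 / (P - x2) ^ 2 ≤ 0 := by
      rw [hd2]
      apply div_nonpos_of_nonpos_of_nonneg ?_ (by linarith)
      have : u b ≤ u c := by rw [hub]; exact hmin c hcS
      linarith
    have hp : (0:ℝ) < (P - x2) ^ 2 := pow_pos (hPx x2 hx2S) 2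
    have h := mul_nonpos_of_nonpos_of_nonneg hq hp.le
    rwa [div_mul_cancel₀ _ (ne_of_gt hp)] at h
  have : F x1 < F x2 := hF_mono hx1S hx2S (lt_trans hx1.2 hx2.1)
  linarith
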